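/- Let k ≥ 1 and D ≥ 0, let T̃ be the complete k-ary tree of depth D, with parameters h_u ∈ [0,1] on the nodes, h_u = 0 at depth D, and let φ be defined by φ(u) := 1 at depth D and φ(u) := max{1 − h_u, h_u ∏_i φ(u_{child,i})} otherwise. Define the flag b_u := 0 if 1 − h_u ≥ h_u ∏_i φ(u_{child,i}) and b_u := 1 otherwise, and let T* be the full subtree grown from the root by expanding a node u (giving it its k children) exactly when b_u = 1, and stopping at u when b_u = 0. Then T* attains the maximum: ∏_{u ∈ L^{T*}}(1 − h_u) · ∏_{u' ∈ I^{T*}} h_{u'} = φ(λ) = max over all full subtrees T of ∏_{u ∈ L^T}(1 − h_u) · ∏_{u' ∈ I^T} h_{u'}. In particular, with h_u = g_{u|t} from the quadtree mixture algorithm, T* is a maximum a posteriori model: T* ∈ argmax_m p(m | v^t). -/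

import Mathlib

inductive FullTree (k : ℕ) : ℕ → Type where
  | leaf {D : ℕ} : FullTree k D
  | node {D : ℕ} (c : Fin k → FullTree k D) : FullTree k (D + 1)

namespace FullTree

def equivZero (k : ℕ) : FullTree k 0 ≃ Unit where
  toFun _ := ()
  invFun _ := .leaf
  left_inv t := by cases t; rfl
  right_inv _ := rfl

def equivSucc (k D : ℕ) : FullTree k (D + 1) ≃ Option (Fin k → FullTree k D) where
  toFun t := match t with
    | .leaf => none
    | .node c => some c
  invFun o := match o with
    | none => .leaf
    | some c => .node c
  left_inv t := by cases t <;> rfl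
  right_inv o := by cases o <;> rfl

instance instFintype (k : ℕ) : (D : ℕ) → Fintype (FullTree k D)
  | 0 => Fintype.ofEquiv Unit (equivZero k).symm
  | (D + 1) => letI := instFintype k D; Fintype.ofEquiv _ (equivSucc k D).symm

noncomputable instance (k D : ℕ) : DecidableEq (FullTree k D) := Classical.decEq _

/-- The set of (paths to) leaf nodes of a full subtree whose root has path `u`. -/
def leaves {k : ℕ} : {D : ℕ} → List (Fin k) → FullTree k D → Finset (List (Fin k))
  | _, u, .leaf => {u}
  | _, u, .node c => Finset.univ.biUnion fun i => leaves (u ++ [i]) (c i)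

/-- The set of (paths to) inner nodes of a full subtree whose root has path `u`. -/
def inners {k : ℕ} : {D : ℕ} → List (Fin k) → FullTree k D → Finset (List (Fin k))
  | _, _, .leaf => ∅
  | _, u, .node c => insert u (Finset.univ.biUnion fun i => inners (u ++ [i]) (c i))

/-- The weight ∏_{u ∈ L^T} (1 - g u) * ∏_{u ∈ I^T} g u of a full subtree rooted at path `u`. -/
noncomputable def weight {k D : ℕ} (g : List (Fin k) → ℝ) (u : List (Fin k))
    (T : FullTree k D) : ℝ :=
  (∏ s ∈ leaves u T, (1 - g s)) * ∏ s ∈ inners u T, g s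

end FullTree

namespace FullTree

/-- Follow the path `p` down the full subtree `T` (whose root has path `u`) until a leaf of
`T` is reached; returns the path of that leaf.  For a pixel `p` (a path of full length
`dmax`), `leafOf [] m p` is the unique leaf block `s_m` of `m` containing the pixel `p`. -/
def leafOf {k : ℕ} : {D : ℕ} → List (Fin k) → FullTree k D → List (Fin k) → List (Fin k)
  | _, u, .leaf, _ => u
  | _, u, .node _, [] => u
  | _, u, .node c, i :: p => leafOf (u ++ [i]) (c i) p

end FullTree

/-- The likelihood `p(v^{t-1} | m) = ∏_{i < t} q̃(v_i | v^{i-1}, s_m(i))` of the first `t`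
pixel values under model `m`, where `qt i s x = q̃(x | v^{i-1}, s)` is the per-block
predictive pmf and `s_m(i)` the unique leaf of `m` containing pixel `i`. -/
noncomputable def like (dmax : ℕ) {V : Type} (qt : ℕ → List (Fin 4) → V → ℝ)
    (v : ℕ → V) (pix : ℕ → List (Fin 4)) (m : FullTree 4 dmax) (t : ℕ) : ℝ :=
  ∏ i ∈ Finset.range t, qt i (FullTree.leafOf [] m (pix i)) (v i)

/-- `Qd dmax qt v pix G t j` is the recursively mixed coding probability
`q(v_t | v^{t-1}, s)` at the block `s = (pix t).take (dmax - j)` on the path `S_t` of blocks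
containing pixel `t` (`j` is the distance from `s` down to the singleton block of `S_t`),
computed with the current weights `G = g_{·|t-1}`:
`q = q̃` at singleton blocks and `q = (1 - g_{s|t-1}) q̃ + g_{s|t-1} q(child)` otherwise. -/
noncomputable def Qd (dmax : ℕ) {V : Type} (qt : ℕ → List (Fin 4) → V → ℝ)
    (v : ℕ → V) (pix : ℕ → List (Fin 4)) (G : List (Fin 4) → ℝ) (t : ℕ) : ℕ → ℝ
  | 0 => qt t ((pix t).take dmax) (v t)
  | j + 1 =>
    (1 - G ((pix t).take (dmax - (j + 1)))) * qt t ((pix t).take (dmax - (j + 1))) (v t)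
      + G ((pix t).take (dmax - (j + 1))) * Qd dmax qt v pix G t j

/-- One step of the weight update: `g_{s|t} = g_{s|t-1}` if `s ∉ S_t` or `|s| = 1`
(`s ∈ S_t` iff `s` is a prefix of the pixel path `pix t`; `|s| = 1` iff `s.length = dmax`),
and `g_{s|t} = g_{s|t-1} · q(v_t | v^{t-1}, s_child) / q(v_t | v^{t-1}, s)` otherwise. -/
noncomputable def Gnext (dmax : ℕ) {V : Type} (qt : ℕ → List (Fin 4) → V → ℝ)
    (v : ℕ → V) (pix : ℕ → List (Fin 4)) (G : List (Fin 4) → ℝ) (t : ℕ)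
    (s : List (Fin 4)) : ℝ :=
  if s <+: pix t ∧ s.length < dmax then
    G s * Qd dmax qt v pix G t (dmax - s.length - 1) / Qd dmax qt v pix G t (dmax - s.length)
  else G s

/-- `GT dmax qt v pix g t s = g_{s|t-1}`: the sequentially updated weights, with
`GT ... 0 s = g_{s|-1} = g s`. -/
noncomputable def GT (dmax : ℕ) {V : Type} (qt : ℕ → List (Fin 4) → V → ℝ)
    (v : ℕ → V) (pix : ℕ → List (Fin 4)) (g : List (Fin 4) → ℝ) : ℕ → List (Fin 4) → ℝ
  | 0 => g
  | t + 1 => Gnext dmax qt v pix (GT dmax qt v pix g t) t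

/-- `phi k h j u` is the recursively defined value `φ(u)` at the node with path `u` of the
complete `k`-ary tree, where `j` is the remaining depth below `u` (so `j = 0` at the deepest
level, where `φ(u) := 1`), and otherwise
`φ(u) := max (1 - h u) (h u * ∏_{i} φ(u ++ [i]))`. -/
noncomputable def phi (k : ℕ) (h : List (Fin k) → ℝ) : ℕ → List (Fin k) → ℝ
  | 0, _ => 1
  | j + 1, u => max (1 - h u) (h u * ∏ i : Fin k, phi k h j (u ++ [i]))

/-- `growStar k h j u` is the full subtree `T*` below the node with path `u` (remaining
depth `j`) grown by the flags `b_u`: stop at `u` (flag `b_u = 0`) when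
`1 - h u ≥ h u * ∏_i φ(u ++ [i])`, and expand `u` into its `k` children (flag `b_u = 1`)
otherwise. -/
noncomputable def growStar (k : ℕ) (h : List (Fin k) → ℝ) : (j : ℕ) → List (Fin k) → FullTree k j
  | 0, _ => .leaf
  | j + 1, u =>
    if 1 - h u ≥ h u * ∏ i : Fin k, phi k h j (u ++ [i]) then .leaf
    else .node fun i => growStar k h j (u ++ [i])

namespace FullTree

lemma mem_leaves {k j : ℕ} {T : FullTree k j} {u s : List (Fin k)} (hs : s ∈ leaves u T) :
    u <+: s ∧ s.length ≤ u.length + j := by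
  induction T generalizing u with
  | leaf => simp only [leaves, Finset.mem_singleton] at hs; subst hs; exact ⟨List.prefix_refl _, by omega⟩
  | @node j c ih =>
    simp only [leaves, Finset.mem_biUnion, Finset.mem_univ, true_and] at hs
    obtain ⟨i, hi⟩ := hs
    obtain ⟨h1, h2⟩ := ih i hi
    refine ⟨(List.prefix_append u [i]).trans h1, ?_⟩
    simp at h2; omega

lemma mem_inners {k j : ℕ} {T : FullTree k j} {u s : List (Fin k)} (hs : s ∈ inners u T) :
    u <+: s ∧ s.length < u.length + j := by
  induction T generalizing u with
  | leaf => simp [inners] at hs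
  | @node j c ih =>
    simp only [inners, Finset.mem_insert, Finset.mem_biUnion, Finset.mem_univ, true_and] at hs
    rcases hs with rfl | ⟨i, hi⟩
    · exact ⟨List.prefix_refl _, by omega⟩
    · obtain ⟨h1, h2⟩ := ih i hi
      refine ⟨(List.prefix_append u [i]).trans h1, ?_⟩
      simp at h2; omega

lemma child_inj {k : ℕ} {u s : List (Fin k)} {i i' : Fin k}
    (h : (u ++ [i]) <+: s) (h' : (u ++ [i']) <+: s) : i = i' := by
  have := (List.prefix_of_prefix_length_le h h' (by simp)).eq_of_length (by simp)
  simpa using List.append_inj_right this rfl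

lemma weight_leaf {k j : ℕ} (g : List (Fin k) → ℝ) (u : List (Fin k)) :
    weight g u (.leaf : FullTree k j) = 1 - g u := by
  cases j <;> simp [weight, leaves, inners]

lemma weight_node {k j : ℕ} (g : List (Fin k) → ℝ) (u : List (Fin k))
    (c : Fin k → FullTree k j) :
    weight g u (.node c) = g u * ∏ i, weight g (u ++ [i]) (c i) := by
  have hdL : (↑(Finset.univ : Finset (Fin k)) : Set (Fin k)).PairwiseDisjoint
      (fun i => leaves (u ++ [i]) (c i)) := by
    intro i _ i' _ hne
    refine Finset.disjoint_left.mpr fun s hs hs' => hne ?_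
    exact child_inj (mem_leaves hs).1 (mem_leaves hs').1
  have hdI : (↑(Finset.univ : Finset (Fin k)) : Set (Fin k)).PairwiseDisjoint
      (fun i => inners (u ++ [i]) (c i)) := by
    intro i _ i' _ hne
    refine Finset.disjoint_left.mpr fun s hs hs' => hne ?_
    exact child_inj (mem_inners hs).1 (mem_inners hs').1
  have hu : u ∉ Finset.univ.biUnion fun i => inners (u ++ [i]) (c i) := by
    simp only [Finset.mem_biUnion, Finset.mem_univ, true_and, not_exists]
    intro i hi
    have := ((mem_inners hi).1.length_le); simp at this
  simp only [weight, leaves, inners, Finset.prod_biUnion hdL, Finset.prod_insert hu,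
    Finset.prod_biUnion hdI]
  rw [Finset.prod_mul_distrib]; ring

lemma weight_congr {k j : ℕ} {g g' : List (Fin k) → ℝ} {u : List (Fin k)}
    (T : FullTree k j) (h : ∀ s, u <+: s → s.length ≤ u.length + j → g s = g' s) :
    weight g u T = weight g' u T := by
  unfold weight
  congr 1
  · exact Finset.prod_congr rfl fun s hs => by
      rw [h s (mem_leaves hs).1 (mem_leaves hs).2]
  · exact Finset.prod_congr rfl fun s hs => by
      rw [h s (mem_inners hs).1 (mem_inners hs).2.le]

lemma weight_nonneg {k j : ℕ} {g : List (Fin k) → ℝ} {u : List (Fin k)}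
    (T : FullTree k j) (h : ∀ s, u <+: s → s.length ≤ u.length + j → g s ∈ Set.Icc (0:ℝ) 1) :
    0 ≤ weight g u T := by
  apply mul_nonneg
  · exact Finset.prod_nonneg fun s hs => by
      have := h s (mem_leaves hs).1 (mem_leaves hs).2; linarith [this.2]
  · exact Finset.prod_nonneg fun s hs => by
      exact (h s (mem_inners hs).1 (mem_inners hs).2.le).1

end FullTree

section Opt

variable {k D : ℕ} {h : List (Fin k) → ℝ}
  (hh : ∀ u : List (Fin k), u.length ≤ D → h u ∈ Set.Icc (0 : ℝ) 1)

include hh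

lemma phi_nonneg : ∀ (j : ℕ) (u : List (Fin k)), u.length + j ≤ D → 0 ≤ phi k h j u
  | 0, _, _ => zero_le_one
  | j + 1, u, hu => le_trans (by linarith [(hh u (by omega)).2]) (le_max_left _ _)

lemma weight_le_phi {j : ℕ} (T : FullTree k j) :
    ∀ u : List (Fin k), u.length + j ≤ D → FullTree.weight h u T ≤ phi k h j u := by
  induction T with
  | @leaf j =>
    intro u hu
    rw [FullTree.weight_leaf]
    cases j with
    | zero => simpa [phi] using (hh u (by omega)).1
    | succ j => exact le_max_left _ _
  | @node j c ih =>
    intro u hu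
    rw [FullTree.weight_node]
    refine le_trans ?_ (le_max_right _ _)
    apply mul_le_mul_of_nonneg_left _ (hh u (by omega)).1
    apply Finset.prod_le_prod
    · intro i _
      exact FullTree.weight_nonneg (c i) fun s hsu hsl => hh s (by simp at hsl; omega)
    · intro i _
      exact ih i (u ++ [i]) (by simp; omega)

lemma weight_growStar (hhD : ∀ u : List (Fin k), u.length = D → h u = 0) :
    ∀ (j : ℕ) (u : List (Fin k)), u.length + j = D →
      FullTree.weight h u (growStar k h j u) = phi k h j u := by
  intro j
  induction j with
  | zero =>
    intro u hu
    simp [growStar, phi, FullTree.weight_leaf, hhD u (by omega)]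
  | succ j ih =>
    intro u hu
    rw [growStar]
    split_ifs with hc
    · rw [FullTree.weight_leaf, phi, max_eq_left hc]
    · rw [FullTree.weight_node, phi, max_eq_right (le_of_lt (lt_of_not_ge hc))]
      congr 1
      exact Finset.prod_congr rfl fun i _ => ih (u ++ [i]) (by simp; omega)

end Opt

section Seq

variable {dmax : ℕ} {V : Type} {qt : ℕ → List (Fin 4) → V → ℝ} {v : ℕ → V}
  {pix : ℕ → List (Fin 4)}
  (hqt : ∀ t s x, 0 < qt t s x) (hpix : ∀ i, (pix i).length = dmax)

include hqt

lemma Qd_pos {G : List (Fin 4) → ℝ} (hG : ∀ s, s.length ≤ dmax → G s ∈ Set.Icc (0:ℝ) 1)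
    (t : ℕ) : ∀ j, 0 < Qd dmax qt v pix G t j
  | 0 => hqt _ _ _
  | j + 1 => by
    have hs : ((pix t).take (dmax - (j+1))).length ≤ dmax := by
      rw [List.length_take]; omega
    have h01 := hG _ hs
    have hq := hqt t ((pix t).take (dmax - (j+1))) (v t)
    have hp := Qd_pos hG t j
    rw [Qd]
    rcases eq_or_lt_of_le h01.2 with heq | hlt
    · rw [heq]; simpa using hp
    · have h1 : 0 < (1 - G ((pix t).take (dmax - (j+1)))) * qt t ((pix t).take (dmax - (j+1))) (v t) :=
        mul_pos (by linarith) hq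
      nlinarith [mul_nonneg h01.1 hp.le]

include hpix

lemma Qd_succ_eq {G : List (Fin 4) → ℝ} {t : ℕ} {s : List (Fin 4)}
    (hpre : s <+: pix t) (hlen : s.length < dmax) :
    Qd dmax qt v pix G t (dmax - s.length)
      = (1 - G s) * qt t s (v t) + G s * Qd dmax qt v pix G t (dmax - s.length - 1) := by
  have hsd : s.length ≤ dmax := by have := hpre.length_le; rw [hpix t] at this; omega
  obtain ⟨j, hj⟩ : ∃ j, dmax - s.length = j + 1 := ⟨dmax - s.length - 1, by omega⟩
  rw [hj, Qd, show dmax - (j + 1) = s.length from by omega,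
    ← List.prefix_iff_eq_take.mp hpre]
  simp

lemma Gnext_mem {G : List (Fin 4) → ℝ} (hG : ∀ s, s.length ≤ dmax → G s ∈ Set.Icc (0:ℝ) 1)
    (t : ℕ) (s : List (Fin 4)) (hs : s.length ≤ dmax) :
    Gnext dmax qt v pix G t s ∈ Set.Icc (0:ℝ) 1 := by
  rw [Gnext]
  split_ifs with hc
  · obtain ⟨hpre, hlen⟩ := hc
    have hpos := Qd_pos (v := v) (pix := pix) hqt hG t (dmax - s.length)
    have hpos' := Qd_pos (v := v) (pix := pix) hqt hG t (dmax - s.length - 1)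
    have h01 := hG s hs
    constructor
    · exact div_nonneg (mul_nonneg h01.1 hpos'.le) hpos.le
    · rw [div_le_one hpos, Qd_succ_eq hqt hpix hpre hlen]
      nlinarith [mul_nonneg (sub_nonneg.2 h01.2) (hqt t s (v t)).le]
  · exact hG s hs

omit hpix in
lemma Gnext_top {G : List (Fin 4) → ℝ} (t : ℕ) (s : List (Fin 4)) (hs : s.length = dmax) :
    Gnext dmax qt v pix G t s = G s := by
  rw [Gnext, if_neg]; rintro ⟨-, h⟩; omega

lemma GT_mem (g : List (Fin 4) → ℝ)
    (hg : ∀ s, s.length ≤ dmax → g s ∈ Set.Icc (0:ℝ) 1)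
    (hg1 : ∀ s, s.length = dmax → g s = 0) :
    ∀ t, (∀ s, s.length ≤ dmax → GT dmax qt v pix g t s ∈ Set.Icc (0:ℝ) 1)
      ∧ (∀ s, s.length = dmax → GT dmax qt v pix g t s = 0)
  | 0 => ⟨hg, hg1⟩
  | t + 1 => by
    obtain ⟨h1, h2⟩ := GT_mem g hg hg1 t
    exact ⟨fun s hs => Gnext_mem hqt hpix h1 t s hs,
      fun s hs => by rw [GT, Gnext_top hqt, h2 s hs]; exact hs⟩

lemma step {G : List (Fin 4) → ℝ} (hG : ∀ s, s.length ≤ dmax → G s ∈ Set.Icc (0:ℝ) 1)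
    (t : ℕ) {j : ℕ} (T : FullTree 4 j) :
    ∀ u : List (Fin 4), u.length + j = dmax → u <+: pix t →
    FullTree.weight G u T * qt t (FullTree.leafOf u T ((pix t).drop u.length)) (v t)
      = Qd dmax qt v pix G t j
          * FullTree.weight (Gnext dmax qt v pix G t) u T := by
  induction T with
  | @leaf j =>
    intro u hlen hpre
    rw [FullTree.weight_leaf, FullTree.weight_leaf]
    simp only [FullTree.leafOf]
    cases j with
    | zero =>
      have hud : u.length = dmax := by omega
      have hupix : u = pix t := hpre.eq_of_length (by rw [hpix t]; exact hud)
      rw [Gnext, if_neg (by rintro ⟨-, h⟩; omega), Qd]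
      have : (pix t).take dmax = pix t := by
        rw [← hpix t]; exact List.take_length
      rw [this, ← hupix]; ring
    | succ j =>
      have hpos := Qd_pos (v := v) (pix := pix) hqt hG t (j + 1)
      have hQeq : Qd dmax qt v pix G t (j+1)
          = (1 - G u) * qt t u (v t) + G u * Qd dmax qt v pix G t j := by
        have := Qd_succ_eq (v := v) hqt hpix (G := G) (t := t) hpre (by omega)
        have h3 : dmax - u.length = j + 1 := by omega
        rw [h3] at this
        simpa using this
      rw [Gnext, if_pos ⟨hpre, by omega⟩]
      have h3 : dmax - u.length = j + 1 := by omega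
      rw [h3, Nat.add_sub_cancel]
      have hne : Qd dmax qt v pix G t (j + 1) ≠ 0 := hpos.ne'
      field_simp
      rw [hQeq]; ring
  | @node j c ih =>
    intro u hlen hpre
    have hult : u.length < (pix t).length := by rw [hpix t]; omega
    set i0 : Fin 4 := (pix t).get ⟨u.length, hult⟩ with hi0
    have hdrop : (pix t).drop u.length = i0 :: (pix t).drop (u.length + 1) :=
      List.drop_eq_getElem_cons hult
    have htake : u ++ [i0] = (pix t).take (u.length + 1) := by
      rw [List.take_succ, List.getElem?_eq_getElem hult]
      rw [← List.prefix_iff_eq_take.mp hpre]; rfl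
    have hpre0 : (u ++ [i0]) <+: pix t := by rw [htake]; exact List.take_prefix _ _
    have hnot : ∀ i : Fin 4, i ≠ i0 → ¬ (u ++ [i]) <+: pix t := fun i hi hp =>
      hi (FullTree.child_inj hp hpre0)
    have hoff : ∀ i : Fin 4, i ≠ i0 →
        FullTree.weight (Gnext dmax qt v pix G t) (u ++ [i]) (c i)
          = FullTree.weight G (u ++ [i]) (c i) := by
      intro i hi
      refine FullTree.weight_congr (c i) fun s hs _ => ?_
      rw [Gnext, if_neg]; rintro ⟨hsp, -⟩; exact hnot i hi (hs.trans hsp)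
    rw [FullTree.weight_node, FullTree.weight_node, hdrop]
    simp only [FullTree.leafOf]
    have hIH := ih i0 (u ++ [i0]) (by simp; omega) hpre0
    have hlen0 : (u ++ [i0]).length = u.length + 1 := by simp
    rw [hlen0] at hIH
    rw [Fintype.prod_eq_mul_prod_compl i0 (fun i => FullTree.weight G (u ++ [i]) (c i)),
      Fintype.prod_eq_mul_prod_compl i0
        (fun i => FullTree.weight (Gnext dmax qt v pix G t) (u ++ [i]) (c i))]
    have hP : (∏ i ∈ ({i0}ᶜ : Finset (Fin 4)),
          FullTree.weight (Gnext dmax qt v pix G t) (u ++ [i]) (c i))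
        = ∏ i ∈ ({i0}ᶜ : Finset (Fin 4)), FullTree.weight G (u ++ [i]) (c i) :=
      Finset.prod_congr rfl fun i hi => hoff i (by simpa using hi)
    rw [hP]
    rw [show Gnext dmax qt v pix G t u
        = G u * Qd dmax qt v pix G t (dmax - u.length - 1) / Qd dmax qt v pix G t (dmax - u.length)
      from by rw [Gnext, if_pos ⟨hpre, by omega⟩]]
    have h3 : dmax - u.length = j + 1 := by omega
    rw [h3]
    have hne : Qd dmax qt v pix G t (j + 1) ≠ 0 := (Qd_pos (v := v) (pix := pix) hqt hG t (j + 1)).ne'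
    have hkey : Qd dmax qt v pix G t (j + 1)
          * (G u * Qd dmax qt v pix G t (j + 1 - 1) / Qd dmax qt v pix G t (j + 1)
            * (FullTree.weight (Gnext dmax qt v pix G t) (u ++ [i0]) (c i0)
              * ∏ i ∈ ({i0}ᶜ : Finset (Fin 4)), FullTree.weight G (u ++ [i]) (c i)))
        = G u * (Qd dmax qt v pix G t j
            * (FullTree.weight (Gnext dmax qt v pix G t) (u ++ [i0]) (c i0)
              * ∏ i ∈ ({i0}ᶜ : Finset (Fin 4)), FullTree.weight G (u ++ [i]) (c i))) := by
      rw [Nat.add_sub_cancel]; field_simp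
    rw [hkey]
    linear_combination
      (G u * ∏ i ∈ ({i0}ᶜ : Finset (Fin 4)), FullTree.weight G (u ++ [i]) (c i)) * hIH


end Seq

section Seq2

variable {dmax : ℕ} {V : Type} {qt : ℕ → List (Fin 4) → V → ℝ} {v : ℕ → V}
  {pix : ℕ → List (Fin 4)}
  (hqt : ∀ t s x, 0 < qt t s x) (hpix : ∀ i, (pix i).length = dmax)
  {g : List (Fin 4) → ℝ}
  (hg : ∀ s : List (Fin 4), s.length ≤ dmax → g s ∈ Set.Icc (0 : ℝ) 1)
  (hg1 : ∀ s : List (Fin 4), s.length = dmax → g s = 0)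

include hqt hpix hg hg1

lemma like_eq (m : FullTree 4 dmax) : ∀ n : ℕ,
    FullTree.weight g [] m * like dmax qt v pix m n
      = (∏ i ∈ Finset.range n, Qd dmax qt v pix (GT dmax qt v pix g i) i dmax)
        * FullTree.weight (GT dmax qt v pix g n) [] m
  | 0 => by simp [like, GT]
  | n + 1 => by
    have hGm := (GT_mem (v := v) hqt hpix g hg hg1 n).1
    have hstep := step (v := v) hqt hpix hGm n m ([] : List (Fin 4)) (by simp) (List.nil_prefix (l := pix n))
    rw [List.length_nil, List.drop_zero] at hstep
    have : like dmax qt v pix m (n + 1)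
        = like dmax qt v pix m n * qt n (FullTree.leafOf [] m (pix n)) (v n) := by
      rw [like, like, Finset.prod_range_succ]
    rw [this, Finset.prod_range_succ, ← mul_assoc, like_eq m n]
    rw [show GT dmax qt v pix g (n + 1) = Gnext dmax qt v pix (GT dmax qt v pix g n) n from rfl]
    rw [mul_assoc, hstep]; ring

end Seq2


/-- (i) The full subtree `T* = growStar k h D []` grown from the root by the
flags attains the maximum of the weight over all full subtrees of the complete `k`-ary tree
of depth `D`: its weight equals `φ(λ)` and dominates the weight of every full subtree.
(ii) In particular, for the quadtree mixture algorithm (`k = 4`) with `h` the sequentially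
updated weights `g_{·|t} = GT dmax qt v pix g (t+1)`, the tree `T*` is a maximum a
posteriori model: its posterior probability `p(T* | v^t)` dominates `p(m | v^t)` for every
model `m` (the posterior being `p(m | v^t) = p(m) p(v^t | m) / ∑_{m'} p(m') p(v^t | m')`). -/
theorem stmt13
    -- general k-ary part
    (k D : ℕ) (hk : 1 ≤ k) (h : List (Fin k) → ℝ)
    (hh : ∀ u : List (Fin k), u.length ≤ D → h u ∈ Set.Icc (0 : ℝ) 1)
    (hhD : ∀ u : List (Fin k), u.length = D → h u = 0)
    -- quadtree mixture algorithm part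
    (dmax : ℕ) (V : Type) [Fintype V]
    (g : List (Fin 4) → ℝ)
    (hg : ∀ s : List (Fin 4), s.length ≤ dmax → g s ∈ Set.Icc (0 : ℝ) 1)
    (hg1 : ∀ s : List (Fin 4), s.length = dmax → g s = 0)
    (qt : ℕ → List (Fin 4) → V → ℝ)
    (hqt : ∀ t s x, 0 < qt t s x)
    (hqts : ∀ t s, ∑ x : V, qt t s x = 1)
    (v : ℕ → V) (pix : ℕ → List (Fin 4))
    (hpix : ∀ i, (pix i).length = dmax)
    (hinj : ∀ i j, i < 4 ^ dmax → j < 4 ^ dmax → pix i = pix j → i = j)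
    (t : ℕ) (ht : t < 4 ^ dmax) :
    (FullTree.weight h [] (growStar k h D []) = phi k h D [])
    ∧ (∀ T : FullTree k D, FullTree.weight h [] T ≤ FullTree.weight h [] (growStar k h D []))
    ∧ (∀ m : FullTree 4 dmax,
        FullTree.weight g [] m * like dmax qt v pix m (t + 1)
            / (∑ m' : FullTree 4 dmax,
                FullTree.weight g [] m' * like dmax qt v pix m' (t + 1))
          ≤ FullTree.weight g [] (growStar 4 (GT dmax qt v pix g (t + 1)) dmax [])
              * like dmax qt v pix (growStar 4 (GT dmax qt v pix g (t + 1)) dmax []) (t + 1)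
            / ∑ m' : FullTree 4 dmax,
                FullTree.weight g [] m' * like dmax qt v pix m' (t + 1)) := by
  refine ⟨weight_growStar hh hhD D [] (by simp), fun T =>
    le_of_le_of_eq (weight_le_phi hh T [] (by simp))
      (weight_growStar hh hhD D [] (by simp)).symm, fun m => ?_⟩
  obtain ⟨hA, hB⟩ := GT_mem (v := v) hqt hpix g hg hg1 (t + 1)
  have hopt : ∀ m' : FullTree 4 dmax,
      FullTree.weight (GT dmax qt v pix g (t + 1)) [] m'
        ≤ FullTree.weight (GT dmax qt v pix g (t + 1)) []
            (growStar 4 (GT dmax qt v pix g (t + 1)) dmax []) := fun m' =>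
    le_of_le_of_eq (weight_le_phi hA m' [] (by simp))
      (weight_growStar hA hB dmax [] (by simp)).symm
  have hCpos : 0 < ∏ i ∈ Finset.range (t + 1),
      Qd dmax qt v pix (GT dmax qt v pix g i) i dmax :=
    Finset.prod_pos fun i _ =>
      Qd_pos (v := v) (pix := pix) hqt ((GT_mem (v := v) hqt hpix g hg hg1 i).1) i dmax
  have key : ∀ m' : FullTree 4 dmax,
      FullTree.weight g [] m' * like dmax qt v pix m' (t + 1)
        = (∏ i ∈ Finset.range (t + 1), Qd dmax qt v pix (GT dmax qt v pix g i) i dmax)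
          * FullTree.weight (GT dmax qt v pix g (t + 1)) [] m' := fun m' =>
    like_eq hqt hpix hg hg1 m' (t + 1)
  have hnum : FullTree.weight g [] m * like dmax qt v pix m (t + 1)
      ≤ FullTree.weight g [] (growStar 4 (GT dmax qt v pix g (t + 1)) dmax [])
        * like dmax qt v pix (growStar 4 (GT dmax qt v pix g (t + 1)) dmax []) (t + 1) := by
    rw [key m, key (growStar 4 (GT dmax qt v pix g (t + 1)) dmax [])]
    exact mul_le_mul_of_nonneg_left (hopt m) hCpos.le
  rw [div_eq_mul_inv, div_eq_mul_inv]
  refine mul_le_mul_of_nonneg_right hnum (inv_nonneg.2 (Finset.sum_nonneg fun m' _ => ?_))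
  refine mul_nonneg
    (FullTree.weight_nonneg m' fun s hs hl => hg s (by simpa using hl)) ?_
  exact Finset.prod_nonneg fun i _ => (hqt i _ _).le
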